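/- Let L > 0, f ∈ H¹(T_L), and let α ∈ (2π/L)ℤ with α > 0. If 𝓔(e^{iαx}f) ≥ 0, then (1/4)||f||⁴_{L⁴(T_L)} ≤ −P(f) + (α/2)M(f) + 𝓔(f)/(2α). -/

import Mathlib

open MeasureTheory Real Complex Filter
open scoped Topology

noncomputable section

/-- The squared `L²` norm over one period `[0,L)`; for `f` itself this is the mass `M(f)`. -/
def Mq (L : ℝ) (f : ℝ → ℂ) : ℝ := ∫ x in Set.Ioc (0:ℝ) L, ‖f x‖ ^ 2

/-- The `L⁴(T_L)` norm. -/
def L4 (L : ℝ) (f : ℝ → ℂ) : ℝ := (∫ x in Set.Ioc (0:ℝ) L, ‖f x‖ ^ 4) ^ ((1:ℝ)/4)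

/-- The `L⁶(T_L)` norm. -/
def L6 (L : ℝ) (f : ℝ → ℂ) : ℝ := (∫ x in Set.Ioc (0:ℝ) L, ‖f x‖ ^ 6) ^ ((1:ℝ)/6)

/-- `f` is an `H¹` function on the circle `T_L = ℝ/(Lℤ)` with weak derivative `fd`:
both are periodic with period `L`, `fd` is square-integrable on a period, and `f`
is the antiderivative of `fd`. -/
structure H1p (L : ℝ) (f fd : ℝ → ℂ) : Prop where
  per_f : Function.Periodic f L
  per_fd : Function.Periodic fd L
  memL2 : MemLp fd 2 (volume.restrict (Set.Ioc 0 L))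
  eq_int : ∀ x : ℝ, f x = f 0 + ∫ t in (0:ℝ)..x, fd t

/-- The `H¹(T_L)` norm of `f` (with weak derivative `fd`). -/
def H1norm (L : ℝ) (f fd : ℝ → ℂ) : ℝ := Real.sqrt (Mq L f + Mq L fd)

/-- The conserved quantity `𝓔(f) = ∫|f'|² − (1/16)∫|f|⁶ + (3/8)μ(f)∫|f|⁴`. -/
def calE (L : ℝ) (f fd : ℝ → ℂ) : ℝ :=
  Mq L fd - (1/16) * (∫ x in Set.Ioc (0:ℝ) L, ‖f x‖ ^ 6)
    + (3/8) * (Mq L f / L) * ∫ x in Set.Ioc (0:ℝ) L, ‖f x‖ ^ 4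

/-- The momentum `P(f) = Im ∫ f conj(f') − (1/4)∫|f|⁴`. -/
def momP (L : ℝ) (f fd : ℝ → ℂ) : ℝ :=
  (∫ x in Set.Ioc (0:ℝ) L, f x * (starRingEnd ℂ) (fd x)).im
    - (1/4) * ∫ x in Set.Ioc (0:ℝ) L, ‖f x‖ ^ 4

/-- The optimal Gagliardo–Nirenberg constant `C_GN = 3^{1/6} (2π)^{−1/9}`. -/
def CGN : ℝ := (3:ℝ) ^ ((1:ℝ)/6) * (2 * Real.pi) ^ (-((1:ℝ)/9))


lemma aux_norm_exp (α x : ℝ) (z : ℂ) : ‖Complex.exp (Complex.I * α * x) * z‖ = ‖z‖ := by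
  rw [norm_mul, Complex.norm_exp]; simp

lemma aux_ptwise (α : ℝ) (a b : ℂ) :
    ‖a + Complex.I * α * b‖^2 = ‖a‖^2 + α^2 * ‖b‖^2 - 2*α*(b * (starRingEnd ℂ) a).im := by
  simp only [Complex.sq_norm, Complex.normSq_apply, Complex.add_re,
    Complex.add_im, Complex.mul_re, Complex.mul_im, Complex.I_re, Complex.I_im,
    Complex.ofReal_re, Complex.ofReal_im, Complex.conj_re, Complex.conj_im]
  ring


/-- For `f ∈ H¹(T_L)` and `α ∈ (2π/L)ℤ`, `α > 0`: if the modulation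
`φ(x) = e^{iαx}f(x)` satisfies `𝓔(φ) ≥ 0`, then
`(1/4)‖f‖₄⁴ ≤ −P(f) + (α/2)M(f) + 𝓔(f)/(2α)`. -/
theorem statement17 (L : ℝ) (hL : 0 < L) (f fd : ℝ → ℂ) (hf : H1p L f fd)
    (k : ℤ) (α : ℝ) (hα : α = 2 * Real.pi * k / L) (hαpos : 0 < α)
    (hE : 0 ≤ calE L (fun x => Complex.exp (Complex.I * α * x) * f x)
      (fun x => Complex.exp (Complex.I * α * x) * (fd x + Complex.I * α * f x))) :
    (1/4) * (L4 L f) ^ 4 ≤ -momP L f fd + (α / 2) * Mq L f + calE L f fd / (2 * α) := by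
  set S : Set ℝ := Set.Ioc (0:ℝ) L with hS
  haveI : IsFiniteMeasure (volume.restrict S) :=
    ⟨by rw [Measure.restrict_apply_univ, hS, Real.volume_Ioc]; exact ENNReal.ofReal_lt_top⟩
  have hfdInt : IntegrableOn fd S := hf.memL2.integrable one_le_two
  -- continuity of f on Icc 0 L
  have hfco : ContinuousOn f (Set.Icc 0 L) := by
    have h1 : IntegrableOn fd (Set.uIcc 0 L) volume := by
      rw [Set.uIcc_of_le hL.le, integrableOn_Icc_iff_integrableOn_Ioc]; exact hfdInt
    have h2 := intervalIntegral.continuousOn_primitive_interval (a := 0) (b := L) h1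
    rw [Set.uIcc_of_le hL.le] at h2
    exact (continuousOn_const.add h2).congr (fun x _ => hf.eq_int x)
  obtain ⟨C, hC⟩ := isCompact_Icc.exists_bound_of_continuousOn hfco
  have haesm : AEStronglyMeasurable f (volume.restrict S) :=
    (hfco.mono Set.Ioc_subset_Icc_self).aestronglyMeasurable measurableSet_Ioc
  have hbd : ∀ᵐ x ∂(volume.restrict S), ‖f x‖ ≤ C :=
    (ae_restrict_iff' measurableSet_Ioc).mpr
      (ae_of_all _ fun x hx => hC x (Set.Ioc_subset_Icc_self hx))
  have hfL2 : MemLp f 2 (volume.restrict S) := MemLp.of_bound haesm C hbd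
  -- integrability pieces
  have i1 : Integrable (fun x => ‖fd x‖^2) (volume.restrict S) := hf.memL2.norm.integrable_sq
  have i2 : Integrable (fun x => ‖f x‖^2) (volume.restrict S) := hfL2.norm.integrable_sq
  have icj : Integrable (fun x => (starRingEnd ℂ) (fd x)) (volume.restrict S) := by
    refine Integrable.mono hfdInt
      (continuous_star.comp_aestronglyMeasurable hfdInt.aestronglyMeasurable)
      (ae_of_all _ fun x => ?_)
    simp
  have i3 : Integrable (fun x => f x * (starRingEnd ℂ) (fd x)) (volume.restrict S) :=
    icj.bdd_mul haesm hbd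
  set I : ℝ := (∫ x in S, f x * (starRingEnd ℂ) (fd x)).im with hI
  -- modulated derivative L² norm
  have hkey : Mq L (fun x => Complex.exp (Complex.I * α * x) * (fd x + Complex.I * α * f x))
      = Mq L fd + α^2 * Mq L f - 2*α*I := by
    have : ∀ x : ℝ, ‖Complex.exp (Complex.I * α * x) * (fd x + Complex.I * α * f x)‖^2
        = ‖fd x‖^2 + α^2 * ‖f x‖^2 - 2*α*(f x * (starRingEnd ℂ) (fd x)).im := by
      intro x; rw [aux_norm_exp, aux_ptwise]
    rw [Mq]
    calc (∫ x in S, ‖Complex.exp (Complex.I * α * x) * (fd x + Complex.I * α * f x)‖^2)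
        = ∫ x in S, (‖fd x‖^2 + α^2 * ‖f x‖^2 - 2*α*(f x * (starRingEnd ℂ) (fd x)).im) := by
          exact integral_congr_ae (ae_of_all _ this)
      _ = Mq L fd + α^2 * Mq L f - 2*α*I := by
          have i3im : Integrable (fun x => (f x * (starRingEnd ℂ) (fd x)).im)
              (volume.restrict S) := by exact i3.im
          have e1 : (∫ x in S, (‖fd x‖^2 + α^2 * ‖f x‖^2
                - 2*α*(f x * (starRingEnd ℂ) (fd x)).im))
              = (∫ x in S, (‖fd x‖^2 + α^2 * ‖f x‖^2))
                - ∫ x in S, 2*α*(f x * (starRingEnd ℂ) (fd x)).im :=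
            integral_sub (i1.add (i2.const_mul _)) (i3im.const_mul _)
          have e2 : (∫ x in S, (‖fd x‖^2 + α^2 * ‖f x‖^2))
              = (∫ x in S, ‖fd x‖^2) + ∫ x in S, α^2 * ‖f x‖^2 :=
            integral_add i1 (i2.const_mul _)
          have e4 : (∫ x in S, (f x * (starRingEnd ℂ) (fd x)).im) = I := by
            rw [hI]; exact integral_im i3
          rw [e1, e2, integral_const_mul, integral_const_mul, e4]
          rfl
  -- norms of modulation agree
  have hnorm : ∀ (n : ℕ) , (∫ x in S, ‖Complex.exp (Complex.I * α * x) * f x‖^n)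
      = ∫ x in S, ‖f x‖^n := by
    intro n; exact integral_congr_ae (ae_of_all _ fun x => by simp only [aux_norm_exp])
  have hMqphi : Mq L (fun x => Complex.exp (Complex.I * α * x) * f x) = Mq L f := hnorm 2
  -- rewrite hE
  rw [calE, hkey, hMqphi, hnorm 6, hnorm 4] at hE
  have hE' : 0 ≤ calE L f fd + α^2 * Mq L f - 2*α*I := by rw [calE]; linarith
  -- L4 power
  have hS4 : 0 ≤ ∫ x in S, ‖f x‖^4 := integral_nonneg fun x => by positivity
  have hL4 : (L4 L f)^4 = ∫ x in S, ‖f x‖^4 := by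
    rw [L4, ← Real.rpow_natCast (_ ^ ((1:ℝ)/4)) 4, ← Real.rpow_mul hS4]
    norm_num
  have h2α : (0:ℝ) < 2*α := by linarith
  have hkey2 : I - (α/2) * Mq L f ≤ calE L f fd / (2*α) := by
    rw [le_div_iff₀ h2α]; nlinarith [hE']
  rw [momP, hL4]
  have : (∫ x in S, f x * (starRingEnd ℂ) (fd x)).im = I := rfl
  rw [this]
  linarith


end
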